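/- Let D be a digraph with arc-strong connectivity λ(D) = ℓ and let 2 ≤ k ≤ ℓ. Then λ_k(D) ≥ ⌊ℓ/k⌋. -/

import Mathlib

open Relation Set

variable {V : Type*}

/-- Reachability in a digraph using only arcs from the arc set `B`. -/
def ArcReach (B : Set (V × V)) : V → V → Prop :=
  Relation.ReflTransGen (fun x y => (x, y) ∈ B)

/-- A digraph, given by its arc set on vertex type `V`, is strongly connected. -/
def IsStrong (A : Set (V × V)) : Prop :=
  ∀ u v : V, ArcReach A u v

/-- `(W, B)` is an `S`-strong subgraph of the digraph with arc set `A`: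
a strongly connected subdigraph whose vertex set contains `S`. -/
def SStrongSub (A : Set (V × V)) (S W : Set V) (B : Set (V × V)) : Prop :=
  B ⊆ A ∧ S ⊆ W ∧ (∀ e ∈ B, e.1 ∈ W ∧ e.2 ∈ W) ∧
    ∀ u ∈ W, ∀ v ∈ W, ArcReach B u v

/-- `λ_S(D)`: the maximum number of pairwise arc-disjoint `S`-strong subgraphs. -/
noncomputable def lamS (A : Set (V × V)) (S : Set V) : ℕ :=
  sSup {t | ∃ (W : Fin t → Set V) (B : Fin t → Set (V × V)),
    (∀ i, SStrongSub A S (W i) (B i)) ∧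
    ∀ i j, i ≠ j → Disjoint (B i) (B j)}

/-- `κ_S(D)`: the maximum number of pairwise internally disjoint
(arc-disjoint, vertex sets meeting exactly in `S`) `S`-strong subgraphs. -/
noncomputable def kapS (A : Set (V × V)) (S : Set V) : ℕ :=
  sSup {t | ∃ (W : Fin t → Set V) (B : Fin t → Set (V × V)),
    (∀ i, SStrongSub A S (W i) (B i)) ∧
    (∀ i j, i ≠ j → Disjoint (B i) (B j)) ∧
    ∀ i j, i ≠ j → W i ∩ W j = S}

/-- Strong subgraph `k`-arc-connectivity `λ_k(D)`. -/
noncomputable def lamK [Fintype V] (A : Set (V × V)) (k : ℕ) : ℕ :=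
  sInf {m | ∃ S : Finset V, S.card = k ∧ m = lamS A ↑S}

/-- Strong subgraph `k`-connectivity `κ_k(D)`. -/
noncomputable def kapK [Fintype V] (A : Set (V × V)) (k : ℕ) : ℕ :=
  sInf {m | ∃ S : Finset V, S.card = k ∧ m = kapS A ↑S}

/-- The arc-strong connectivity `λ(D)`: the minimum number of arcs whose
deletion destroys strong connectivity. -/
noncomputable def arcConn {V : Type*} [Fintype V] (A : Set (V × V)) : ℕ :=
  sInf {m | ∃ F : Finset (V × V), ↑F ⊆ A ∧ F.card = m ∧ ¬ IsStrong (A \ ↑F)}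


set_option linter.unusedSectionVars false

section Aux
variable [Fintype V] [DecidableEq V]

/-- number of arcs of `A` entering `X`. -/
def din (A : Finset (V × V)) (X : Finset V) : ℕ :=
  (A.filter (fun e => e.1 ∉ X ∧ e.2 ∈ X)).card

/-- number of roots outside `X`. -/
def nout (rs : List V) (X : Finset V) : ℕ :=
  rs.countP (fun v => decide (v ∉ X))

lemma din_submod (A : Finset (V × V)) (X Y : Finset V) :
    din A (X ∪ Y) + din A (X ∩ Y) ≤ din A X + din A Y := by
  classical
  simp only [din, Finset.card_filter]
  rw [← Finset.sum_add_distrib, ← Finset.sum_add_distrib]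
  refine Finset.sum_le_sum fun e _ => ?_
  by_cases h1 : e.1 ∈ X <;> by_cases h2 : e.1 ∈ Y <;>
    by_cases h3 : e.2 ∈ X <;> by_cases h4 : e.2 ∈ Y <;>
    simp [Finset.mem_union, Finset.mem_inter, h1, h2, h3, h4]

lemma nout_union_inter (rs : List V) (X Y : Finset V) :
    nout rs (X ∪ Y) + nout rs (X ∩ Y) = nout rs X + nout rs Y := by
  induction rs with
  | nil => rfl
  | cons a l ih =>
    by_cases h1 : a ∈ X <;> by_cases h2 : a ∈ Y <;>
      simp_all [nout, List.countP_cons, Finset.mem_union, Finset.mem_inter] <;> omega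

lemma nout_anti (rs : List V) {X Y : Finset V} (h : X ⊆ Y) :
    nout rs Y ≤ nout rs X := by
  induction rs with
  | nil => exact le_refl _
  | cons a l ih =>
    by_cases h1 : a ∈ X
    · have h2 : a ∈ Y := h h1
      simp_all [nout, List.countP_cons]
    · by_cases h2 : a ∈ Y <;> simp_all [nout, List.countP_cons] <;> omega

lemma nout_le_len (rs : List V) (X : Finset V) : nout rs X ≤ rs.length :=
  List.countP_le_length

lemma nout_univ (rs : List V) : nout rs Finset.univ = 0 := by
  simp [nout]

end Aux

section Reach
variable {V : Type*}

lemma ArcReach.mono {B B' : Set (V × V)} (h : B ⊆ B') {a b : V}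
    (hr : ArcReach B a b) : ArcReach B' a b :=
  Relation.ReflTransGen.mono (r := fun x y => (x, y) ∈ B) (p := fun x y => (x, y) ∈ B')
    (fun _ _ hxy => h hxy) a b hr

lemma ArcReach.trans' {B : Set (V × V)} {a b c : V}
    (h1 : ArcReach B a b) (h2 : ArcReach B b c) : ArcReach B a c :=
  Relation.ReflTransGen.trans h1 h2

lemma arcReach_empty {a b : V} (h : ArcReach (∅ : Set (V × V)) a b) : a = b := by
  induction h with
  | refl => rfl
  | tail _ hstep _ => exact absurd hstep (Set.notMem_empty _)

/-- a walk that never enters `X` stays outside of `X`. -/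
lemma arcReach_stay {B : Set (V × V)} {X : Set V} {a c : V}
    (h : ArcReach B a c) (ha : a ∉ X)
    (hno : ∀ e ∈ B, ¬(e.1 ∉ X ∧ e.2 ∈ X)) : c ∉ X := by
  induction h with
  | refl => exact ha
  | tail _ hstep ih =>
    intro hc
    exact hno _ hstep ⟨ih, hc⟩

/-- reachability from `v` when all arcs out of `v` are loops. -/
lemma arcReach_fixed {B : Set (V × V)} {v c : V}
    (h : ArcReach B v c) (hno : ∀ e ∈ B, e.1 = v → e.2 = v) : c = v := by
  induction h with
  | refl => rfl
  | tail _ hstep ih => exact hno _ hstep ih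

/-- Extract from a reachability proof the arc set of a walk; every vertex incident
with the walk is reachable from `a` and reaches `b` within the walk. -/
lemma exists_walk {B : Set (V × V)} {a b : V} (h : ArcReach B a b) :
    ∃ C : Set (V × V), C ⊆ B ∧ ArcReach C a b ∧
      ∀ x, (∃ e ∈ C, e.1 = x ∨ e.2 = x) → ArcReach C a x ∧ ArcReach C x b := by
  induction h with
  | refl =>
    exact ⟨∅, Set.empty_subset _, Relation.ReflTransGen.refl,
      fun x ⟨e, he, _⟩ => absurd he (Set.notMem_empty _)⟩
  | @tail c d hac hstep ih =>
    obtain ⟨C, hCB, hreach, hend⟩ := ih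
    refine ⟨insert (c, d) C, Set.insert_subset hstep hCB, ?_, ?_⟩
    · exact (hreach.mono (Set.subset_insert _ _)).tail (Set.mem_insert _ _)
    · intro x ⟨e, he, hx⟩
      have hCid : C ⊆ insert (c, d) C := Set.subset_insert _ _
      have hac' : ArcReach (insert (c,d) C) a c := hreach.mono hCid
      have harc : ArcReach (insert (c,d) C) c d :=
        Relation.ReflTransGen.single (Set.mem_insert _ _)
      rcases Set.mem_insert_iff.1 he with he1 | he2
      · subst he1
        rcases hx with hx | hx <;> subst hx
        · exact ⟨hac', harc⟩
        · exact ⟨hac'.trans' harc, Relation.ReflTransGen.refl⟩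
      · obtain ⟨h1, h2⟩ := hend x ⟨e, he2, hx⟩
        exact ⟨h1.mono hCid, (h2.mono hCid).trans' harc⟩

end Reach

section Edmonds
variable {V : Type*} [Fintype V] [DecidableEq V]

def pfun (rs : List V) (U X : Finset V) : ℕ :=
  nout rs X + (if (X ∩ U).Nonempty then 0 else 1)

lemma pfun_insert_le (rs : List V) {U : Finset V} (w : V) (X : Finset V) :
    pfun rs (insert w U) X ≤ pfun rs U X := by
  unfold pfun
  by_cases h : (X ∩ U).Nonempty
  · have h' : (X ∩ insert w U).Nonempty :=
      Finset.Nonempty.mono (Finset.inter_subset_inter_left (Finset.subset_insert _ _)) h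
    simp [h, h']
  · split_ifs <;> omega

lemma din_erase_enter {A' : Finset (V × V)} {e : V × V} {X : Finset V}
    (he : e ∈ A') (h1 : e.1 ∉ X) (h2 : e.2 ∈ X) :
    din (A'.erase e) X = din A' X - 1 := by
  unfold din
  rw [Finset.filter_erase, Finset.card_erase_of_mem (Finset.mem_filter.2 ⟨he, h1, h2⟩)]

lemma din_erase_not {A' : Finset (V × V)} {e : V × V} {X : Finset V}
    (h : ¬(e.1 ∉ X ∧ e.2 ∈ X)) :
    din (A'.erase e) X = din A' X := by
  unfold din
  rw [Finset.filter_erase, Finset.erase_eq_of_notMem]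
  intro hmem
  exact h (Finset.mem_filter.1 hmem).2

lemma edmonds_step (rs : List V) (U : Finset V) (A' : Finset (V × V))
    (hU : U.Nonempty) (hUV : U ≠ Finset.univ)
    (inv : ∀ X : Finset V, X.Nonempty → pfun rs U X ≤ din A' X) :
    ∃ u w : V, u ∈ U ∧ w ∉ U ∧ (u, w) ∈ A' ∧
      ∀ X : Finset V, X.Nonempty → pfun rs (insert w U) X ≤ din (A'.erase (u, w)) X := by
  classical
  set fam : Finset (Finset V) := Finset.univ.filter
    (fun X => din A' X = pfun rs U X ∧ (X ∩ U).Nonempty ∧ (X \ U).Nonempty) with hfam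
  have huniv : Finset.univ ∈ fam := by
    rw [hfam, Finset.mem_filter]
    refine ⟨Finset.mem_univ _, ?_, ?_, ?_⟩
    · have h1 : din A' Finset.univ = 0 := by simp [din]
      have h2 : pfun rs U Finset.univ = 0 := by
        have : (Finset.univ ∩ U).Nonempty := by
          rwa [Finset.univ_inter]
        unfold pfun
        rw [if_pos this, nout_univ]
      rw [h1, h2]
    · rwa [Finset.univ_inter]
    · rw [Finset.sdiff_nonempty]
      intro hsub
      exact hUV (Finset.univ_subset_iff.1 hsub)
  obtain ⟨M, hMfam, hMmin⟩ := Finset.exists_min_image fam Finset.card ⟨_, huniv⟩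
  obtain ⟨-, hM1, hM2, hM3⟩ := Finset.mem_filter.1 hMfam
  have hMt : din A' M = nout rs M := by
    rw [hM1]; unfold pfun; rw [if_pos hM2, Nat.add_zero]
  set Y := M \ U with hY
  have hYU : Y ∩ U = ∅ := Finset.sdiff_inter_self _ _
  have hpY : pfun rs U Y = nout rs Y + 1 := by
    unfold pfun
    rw [hYU]
    simp
  have hinvY : nout rs Y + 1 ≤ din A' Y := hpY ▸ inv Y hM3
  set Fin1 := A'.filter (fun e => e.1 ∈ M ∧ e.1 ∉ Y ∧ e.2 ∈ Y) with hFin1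
  have hsplit : din A' Y ≤ Fin1.card + din A' M := by
    have hsub2 : A'.filter (fun e => e.1 ∉ Y ∧ e.2 ∈ Y) ⊆
        Fin1 ∪ A'.filter (fun e => e.1 ∉ M ∧ e.2 ∈ M) := by
      intro e he
      obtain ⟨heA, h1, h2⟩ := Finset.mem_filter.1 he
      by_cases hM : e.1 ∈ M
      · exact Finset.mem_union_left _ (Finset.mem_filter.2 ⟨heA, hM, h1, h2⟩)
      · exact Finset.mem_union_right _
          (Finset.mem_filter.2 ⟨heA, hM, Finset.sdiff_subset h2⟩)
    calc din A' Y ≤ (Fin1 ∪ A'.filter (fun e => e.1 ∉ M ∧ e.2 ∈ M)).card :=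
          Finset.card_le_card hsub2
      _ ≤ Fin1.card + din A' M := Finset.card_union_le _ _
  have hnoutMY : nout rs M ≤ nout rs Y := nout_anti rs Finset.sdiff_subset
  have hcard : 0 < Fin1.card := by omega
  obtain ⟨e, he⟩ := Finset.card_pos.1 hcard
  obtain ⟨heA, he1M, he1Y, he2Y⟩ := Finset.mem_filter.1 he
  have hu : e.1 ∈ U := by
    by_contra h
    exact he1Y (Finset.mem_sdiff.2 ⟨he1M, h⟩)
  have hwU : e.2 ∉ U := (Finset.mem_sdiff.1 he2Y).2
  have hwM : e.2 ∈ M := (Finset.mem_sdiff.1 he2Y).1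
  have heA' : (e.1, e.2) ∈ A' := by rwa [Prod.mk.eta]
  refine ⟨e.1, e.2, hu, hwU, heA', ?_⟩
  intro X hX
  have hpX' : pfun rs (insert e.2 U) X ≤ pfun rs U X := pfun_insert_le rs e.2 X
  by_cases hent : e.1 ∉ X ∧ e.2 ∈ X
  · have hder : din (A'.erase (e.1, e.2)) X = din A' X - 1 := by
      rw [Prod.mk.eta]; exact din_erase_enter heA hent.1 hent.2
    by_cases hXU : (X ∩ U).Nonempty
    · have hpfX : pfun rs U X = nout rs X := by simp [pfun, hXU]
      have hpfX' : pfun rs (insert e.2 U) X = nout rs X := by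
        have : (X ∩ insert e.2 U).Nonempty :=
          Finset.Nonempty.mono (Finset.inter_subset_inter_left (Finset.subset_insert _ _)) hXU
        unfold pfun; rw [if_pos this, Nat.add_zero]
      by_cases htight : din A' X = pfun rs U X
      · exfalso
        have hXfam : X ∈ fam := by
          rw [hfam, Finset.mem_filter]
          exact ⟨Finset.mem_univ _, htight, hXU,
            ⟨e.2, Finset.mem_sdiff.2 ⟨hent.2, hwU⟩⟩⟩
        have hXt : din A' X = nout rs X := by rw [htight, hpfX]
        have hwXM : e.2 ∈ X ∩ M := Finset.mem_inter.2 ⟨hent.2, hwM⟩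
        have hsub := din_submod A' X M
        have hinv1 := inv (X ∪ M) ⟨e.2, Finset.mem_union_left _ hent.2⟩
        have hinv2 := inv (X ∩ M) ⟨e.2, hwXM⟩
        have hmod := nout_union_inter rs X M
        have hU1 : ((X ∪ M) ∩ U).Nonempty :=
          Finset.Nonempty.mono (Finset.inter_subset_inter_right Finset.subset_union_left) hXU
        have hp1 : pfun rs U (X ∪ M) = nout rs (X ∪ M) := by
          unfold pfun; rw [if_pos hU1, Nat.add_zero]
        rw [hp1] at hinv1
        by_cases hind : ((X ∩ M) ∩ U).Nonempty
        · have hp2 : pfun rs U (X ∩ M) = nout rs (X ∩ M) := by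
            unfold pfun; rw [if_pos hind, Nat.add_zero]
          rw [hp2] at hinv2
          have htight2 : din A' (X ∩ M) = pfun rs U (X ∩ M) := by
            rw [hp2]; omega
          have hXMfam : X ∩ M ∈ fam := by
            rw [hfam, Finset.mem_filter]
            refine ⟨Finset.mem_univ _, htight2, hind,
              ⟨e.2, Finset.mem_sdiff.2 ⟨hwXM, hwU⟩⟩⟩
          have hne : X ∩ M ≠ M := by
            intro hEq
            have : e.1 ∈ X ∩ M := by rw [hEq]; exact he1M
            exact hent.1 (Finset.mem_inter.1 this).1
          have hlt : X ∩ M ⊂ M :=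
            HasSubset.Subset.ssubset_of_ne Finset.inter_subset_right hne
          exact absurd (hMmin _ hXMfam) (not_le_of_gt (Finset.card_lt_card hlt))
        · have hp2 : pfun rs U (X ∩ M) = nout rs (X ∩ M) + 1 := by
            unfold pfun; rw [if_neg hind]
          rw [hp2] at hinv2
          omega
      · have h1 : pfun rs U X + 1 ≤ din A' X :=
          Nat.succ_le_of_lt (lt_of_le_of_ne (inv X hX) (Ne.symm htight))
        omega
    · have hpU : pfun rs U X = nout rs X + 1 := by
        unfold pfun; rw [if_neg hXU]
      have hpU' : pfun rs (insert e.2 U) X = nout rs X := by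
        have : (X ∩ insert e.2 U).Nonempty :=
          ⟨e.2, Finset.mem_inter.2 ⟨hent.2, Finset.mem_insert_self _ _⟩⟩
        unfold pfun; rw [if_pos this, Nat.add_zero]
      have := inv X hX
      omega
  · have hder : din (A'.erase (e.1, e.2)) X = din A' X := by
      rw [Prod.mk.eta]; exact din_erase_not hent
    rw [hder]
    exact le_trans hpX' (inv X hX)

lemma edmonds_grow (rs : List V) (r : V) (A : Finset (V × V)) :
    ∀ (n : ℕ) (U : Finset V) (F : Finset (V × V)),
      (Finset.univ \ U).card ≤ n → r ∈ U → F ⊆ A →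
      (∀ v ∈ U, ArcReach (↑F : Set (V × V)) r v) →
      (∀ X : Finset V, X.Nonempty → pfun rs U X ≤ din (A \ F) X) →
      ∃ F' : Finset (V × V), F ⊆ F' ∧ F' ⊆ A ∧
        (∀ v : V, ArcReach (↑F' : Set (V × V)) r v) ∧
        (∀ X : Finset V, X.Nonempty → nout rs X ≤ din (A \ F') X) := by
  intro n
  induction n with
  | zero =>
    intro U F hcard hr hFA hreach hinv
    have hU : U = Finset.univ := by
      have h0 : Finset.univ \ U = ∅ := Finset.card_eq_zero.1 (Nat.le_zero.1 hcard)
      apply Finset.univ_subset_iff.1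
      intro x hx
      by_contra hxU
      have : x ∈ Finset.univ \ U := Finset.mem_sdiff.2 ⟨hx, hxU⟩
      simp [h0] at this
    refine ⟨F, subset_refl _, hFA, fun v => hreach v (hU ▸ Finset.mem_univ v), ?_⟩
    intro X hX
    have h1 := hinv X hX
    have h2 : pfun rs U X = nout rs X := by
      unfold pfun
      rw [if_pos, Nat.add_zero]
      rw [hU, Finset.inter_univ]
      exact hX
    omega
  | succ n ih =>
    intro U F hcard hr hFA hreach hinv
    by_cases hUV : U = Finset.univ
    · refine ⟨F, subset_refl _, hFA, fun v => hreach v (hUV ▸ Finset.mem_univ v), ?_⟩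
      intro X hX
      have h1 := hinv X hX
      have h2 : pfun rs U X = nout rs X := by
        unfold pfun
        rw [if_pos, Nat.add_zero]
        rw [hUV, Finset.inter_univ]
        exact hX
      omega
    · obtain ⟨u, w, hu, hw, huwA, hinv'⟩ := edmonds_step rs U (A \ F) ⟨r, hr⟩ hUV hinv
      have huwF : (u, w) ∉ F := (Finset.mem_sdiff.1 huwA).2
      have huwAmem : (u, w) ∈ A := (Finset.mem_sdiff.1 huwA).1
      have hnew : A \ insert (u, w) F = (A \ F).erase (u, w) :=
        Finset.sdiff_insert A F (u, w)
      have hwuniv : w ∈ Finset.univ \ U := Finset.mem_sdiff.2 ⟨Finset.mem_univ _, hw⟩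
      have hcard' : (Finset.univ \ insert w U).card ≤ n := by
        rw [Finset.sdiff_insert, Finset.card_erase_of_mem hwuniv]
        omega
      have hreach' : ∀ v ∈ insert w U, ArcReach (↑(insert (u, w) F) : Set (V × V)) r v := by
        intro v hv
        have hsub : (↑F : Set (V × V)) ⊆ ↑(insert (u, w) F) := by
          intro x hx
          simp only [Finset.coe_insert, Set.mem_insert_iff]
          exact Or.inr hx
        rcases Finset.mem_insert.1 hv with hv | hv
        · subst hv
          refine ((hreach u hu).mono hsub).tail ?_
          simp
        · exact (hreach v hv).mono hsub
      have hinv'' : ∀ X : Finset V, X.Nonempty →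
          pfun rs (insert w U) X ≤ din (A \ insert (u, w) F) X := by
        intro X hX
        rw [hnew]
        exact hinv' X hX
      obtain ⟨F', hFF', hF'A, hre, hfin⟩ := ih (insert w U) (insert (u, w) F) hcard'
        (Finset.mem_insert_of_mem hr)
        (Finset.insert_subset huwAmem hFA) hreach' hinv''
      exact ⟨F', (Finset.subset_insert _ _).trans hFF', hF'A, hre, hfin⟩

theorem edmonds_branchings :
    ∀ (rs : List V) (A : Finset (V × V)),
      (∀ X : Finset V, X.Nonempty → nout rs X ≤ din A X) →
      ∃ F : Fin rs.length → Finset (V × V),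
        (∀ i, F i ⊆ A) ∧ (∀ i j, i ≠ j → Disjoint (F i) (F j)) ∧
        ∀ i (v : V), ArcReach (↑(F i) : Set (V × V)) (rs.get i) v := by
  intro rs
  induction rs with
  | nil =>
    intro A _
    exact ⟨fun i => ∅, fun i => Finset.empty_subset _,
      fun i j _ => Finset.disjoint_empty_left _, fun i => i.elim0⟩
  | cons r rest ih =>
    intro A h
    have hinv0 : ∀ X : Finset V, X.Nonempty → pfun rest {r} X ≤ din (A \ ∅) X := by
      intro X hX
      have h1 := h X hX
      rw [Finset.sdiff_empty]
      unfold pfun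
      by_cases hrX : r ∈ X
      · rw [if_pos ⟨r, Finset.mem_inter.2 ⟨hrX, Finset.mem_singleton_self r⟩⟩, Nat.add_zero]
        have h2 : nout rest X ≤ nout (r :: rest) X := by
          simp only [nout, List.countP_cons]
          omega
        omega
      · rw [if_neg]
        · have h2 : nout (r :: rest) X = nout rest X + 1 := by
            simp only [nout, List.countP_cons, hrX]
            simp
          omega
        · rintro ⟨x, hx⟩
          obtain ⟨hx1, hx2⟩ := Finset.mem_inter.1 hx
          rw [Finset.mem_singleton.1 hx2] at hx1
          exact hrX hx1
    obtain ⟨F1, -, hF1A, hreach1, hinv1⟩ :=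
      edmonds_grow rest r A (Finset.univ \ ({r} : Finset V)).card {r} ∅ le_rfl
        (Finset.mem_singleton_self r) (Finset.empty_subset _)
        (fun v hv => by rw [Finset.mem_singleton.1 hv]; exact Relation.ReflTransGen.refl) hinv0
    obtain ⟨Fr, hFrA, hFrd, hFrreach⟩ := ih (A \ F1) hinv1
    refine ⟨fun i => Fin.cases F1 (fun j => Fr j) i, ?_, ?_, ?_⟩
    · intro i
      induction i using Fin.cases with
      | zero => exact hF1A
      | succ j => exact (hFrA j).trans (Finset.sdiff_subset)
    · intro i j hij
      induction i using Fin.cases with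
      | zero =>
        induction j using Fin.cases with
        | zero => exact absurd rfl hij
        | succ j' =>
          simp only [Fin.cases_zero, Fin.cases_succ]
          rw [Finset.disjoint_left]
          intro a ha ha'
          exact (Finset.mem_sdiff.1 (hFrA j' ha')).2 ha
      | succ i' =>
        induction j using Fin.cases with
        | zero =>
          simp only [Fin.cases_zero, Fin.cases_succ]
          rw [Finset.disjoint_right]
          intro a ha ha'
          exact (Finset.mem_sdiff.1 (hFrA i' ha')).2 ha
        | succ j' =>
          simp only [Fin.cases_succ]
          exact hFrd i' j' (fun hEq => hij (by rw [hEq]))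
    · intro i v
      induction i using Fin.cases with
      | zero => exact hreach1 v
      | succ j =>
        simp only [Fin.cases_succ]
        have := hFrreach j v
        simpa using this

end Edmonds

section Main
variable {V : Type*} [Fintype V] [DecidableEq V]

lemma lamS_bddAbove (A : Set (V × V)) (S : Set V) (a b : V)
    (ha : a ∈ S) (hb : b ∈ S) (hab : a ≠ b) :
    BddAbove {t | ∃ (W : Fin t → Set V) (B : Fin t → Set (V × V)),
      (∀ i, SStrongSub A S (W i) (B i)) ∧
      ∀ i j, i ≠ j → Disjoint (B i) (B j)} := by
  refine ⟨Fintype.card (V × V), ?_⟩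
  rintro t' ⟨W, B, hSS, hdis⟩
  have hne : ∀ i : Fin t', (B i).Nonempty := by
    intro i
    rcases Set.eq_empty_or_nonempty (B i) with h0 | h
    · exfalso
      obtain ⟨_, hSW, _, hstr⟩ := hSS i
      have := hstr a (hSW ha) b (hSW hb)
      rw [h0] at this
      exact hab (arcReach_empty this)
    · exact h
  choose f hf using hne
  have hinj : Function.Injective f := by
    intro i j hij
    by_contra hne'
    have h1 := hf i
    have h2 := hf j
    rw [hij] at h1
    exact Set.disjoint_left.1 (hdis i j hne') h1 h2
  calc t' = Fintype.card (Fin t') := (Fintype.card_fin t').symm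
    _ ≤ Fintype.card (V × V) := Fintype.card_le_of_injective f hinj

lemma cut_bound {A : Set (V × V)} {ℓ : ℕ} (hl : arcConn A = ℓ)
    (hstr : ∀ F : Finset (V × V), ↑F ⊆ A → F.card < ℓ → IsStrong (A \ ↑F))
    (Afin : Finset (V × V)) (hAfin : ↑Afin = A)
    (X : Finset V) (hXne : X.Nonempty) (hXuniv : X ≠ Finset.univ) :
    ℓ ≤ din Afin X := by
  by_contra hlt
  push_neg at hlt
  set F := Afin.filter (fun e => e.1 ∉ X ∧ e.2 ∈ X) with hF
  have hFsub : ↑F ⊆ A := by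
    rw [← hAfin]
    exact Finset.coe_subset.2 (Finset.filter_subset _ _)
  have hFcard : F.card < ℓ := hlt
  have hstrong := hstr F hFsub hFcard
  obtain ⟨a, haX⟩ : ∃ a, a ∉ X := by
    by_contra hall
    push_neg at hall
    exact hXuniv (Finset.eq_univ_iff_forall.2 hall)
  obtain ⟨b, hbX⟩ := hXne
  have hreach := hstrong a b
  have hstay : b ∉ (↑X : Set V) := by
    refine arcReach_stay hreach (by simpa using haX) ?_
    rintro e he ⟨h1, h2⟩
    have heA : e ∈ Afin := by
      rw [← Finset.mem_coe, hAfin]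
      exact he.1
    have heF : e ∈ F := Finset.mem_filter.2 ⟨heA, by simpa using h1, by simpa using h2⟩
    exact he.2 (Finset.mem_coe.2 heF)
  exact hstay (by simpa using hbX)

lemma strong_del {A : Set (V × V)} {ℓ : ℕ} (hl : arcConn A = ℓ) :
    ∀ F : Finset (V × V), ↑F ⊆ A → F.card < ℓ → IsStrong (A \ ↑F) := by
  intro F hsub hcard
  by_contra hns
  have hmem : F.card ∈ {m | ∃ F : Finset (V × V), (↑F : Set (V × V)) ⊆ A ∧
      F.card = m ∧ ¬ IsStrong (A \ (↑F : Set (V × V)))} := ⟨F, hsub, rfl, hns⟩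
  have h2 : arcConn A ≤ F.card := Nat.sInf_le hmem
  omega

lemma lamS_ge_div {A : Set (V × V)} {ℓ k : ℕ} (hl : arcConn A = ℓ)
    (h2 : 2 ≤ k) (hk : k ≤ ℓ) (S : Finset V) (hScard : S.card = k) :
    ℓ / k ≤ lamS A ↑S := by
  classical
  have hk0 : 0 < k := by omega
  set t := ℓ / k with ht
  have hstr := strong_del hl
  set Afin : Finset (V × V) := (Set.toFinite A).toFinset with hAf
  have hAfin : ↑Afin = A := Set.Finite.coe_toFinset _
  set σ : Fin k → V := fun i => (S.equivFin.symm (Fin.cast hScard.symm i) : V) with hσ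
  have hσS : ∀ i, σ i ∈ S := fun i => (S.equivFin.symm (Fin.cast hScard.symm i)).2
  have hσsurj : ∀ x ∈ S, ∃ i, σ i = x := by
    intro x hx
    refine ⟨Fin.cast hScard (S.equivFin ⟨x, hx⟩), ?_⟩
    rw [hσ]
    simp
  set nxt : Fin k → Fin k := fun i => ⟨(i.val + 1) % k, Nat.mod_lt _ hk0⟩ with hnxt
  set ν : Fin (t * k) → V := fun x => σ ⟨x.val % k, Nat.mod_lt _ hk0⟩ with hν
  set rs : List V := List.ofFn ν with hrs
  have hlen : rs.length = t * k := List.length_ofFn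
  have hedm : ∀ X : Finset V, X.Nonempty → nout rs X ≤ din Afin X := by
    intro X hX
    by_cases hXu : X = Finset.univ
    · rw [hXu, nout_univ]
      exact Nat.zero_le _
    · calc nout rs X ≤ rs.length := nout_le_len rs X
        _ = t * k := hlen
        _ ≤ ℓ := Nat.div_mul_le_self ℓ k
        _ ≤ din Afin X := cut_bound hl hstr Afin hAfin X hX hXu
  obtain ⟨F, hFsub, hFdis, hFreach⟩ := edmonds_branchings rs Afin hedm
  have hidx : ∀ (j : Fin t) (i : Fin k), i.val + j.val * k < rs.length := by
    intro j i
    rw [hlen]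
    have h1 : i.val + j.val * k < (j.val + 1) * k := by
      rw [add_mul, one_mul]
      omega
    exact lt_of_lt_of_le h1 (Nat.mul_le_mul_right k j.2)
  set idx : Fin t → Fin k → Fin rs.length := fun j i => ⟨i.val + j.val * k, hidx j i⟩
    with hidxdef
  have hroot : ∀ (j : Fin t) (i : Fin k), rs.get (idx j i) = σ i := by
    intro j i
    rw [List.get_of_eq hrs (idx j i), List.get_ofFn]
    show σ _ = σ i
    congr 1
    apply Fin.ext
    show (i.val + j.val * k) % k = i.val
    rw [Nat.add_mul_mod_self_right, Nat.mod_eq_of_lt i.2]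
  have hwalks : ∀ (j : Fin t) (i : Fin k), ∃ C : Set (V × V),
      C ⊆ ↑(F (idx j i)) ∧ ArcReach C (σ i) (σ (nxt i)) ∧
      ∀ x, (∃ e ∈ C, e.1 = x ∨ e.2 = x) → ArcReach C (σ i) x ∧ ArcReach C x (σ (nxt i)) := by
    intro j i
    have h5 := hFreach (idx j i) (σ (nxt i))
    rw [hroot] at h5
    exact exists_walk h5
  choose C hC1 hC2 hC3 using hwalks
  set B : Fin t → Set (V × V) := fun j => ⋃ i : Fin k, C j i with hB
  set W : Fin t → Set V := fun j => ↑S ∪ {x | ∃ e ∈ B j, e.1 = x ∨ e.2 = x} with hW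
  have hCB : ∀ j i, C j i ⊆ B j := fun j i => Set.subset_iUnion (C j) i
  have hBA : ∀ j, B j ⊆ A := by
    intro j e he
    obtain ⟨i, hi⟩ := Set.mem_iUnion.1 he
    have h6 := hC1 j i hi
    rw [← hAfin]
    exact Finset.coe_subset.2 (hFsub _) h6
  have hstep1 : ∀ (j : Fin t) (i : Fin k), ArcReach (B j) (σ i) (σ (nxt i)) :=
    fun j i => (hC2 j i).mono (hCB j i)
  have hcyc : ∀ (j : Fin t) (i i' : Fin k), ArcReach (B j) (σ i) (σ i') := by
    intro j i i'
    have haux : ∀ (n : ℕ) (i : Fin k),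
        ArcReach (B j) (σ i) (σ ⟨(i.val + n) % k, Nat.mod_lt _ hk0⟩) := by
      intro n
      induction n with
      | zero =>
        intro i
        have h7 : (⟨(i.val + 0) % k, Nat.mod_lt _ hk0⟩ : Fin k) = i :=
          Fin.ext (by simp [Nat.mod_eq_of_lt i.2])
        rw [h7]
        exact Relation.ReflTransGen.refl
      | succ n ihn =>
        intro i
        refine (ihn i).trans' ?_
        have h1 := hstep1 j ⟨(i.val + n) % k, Nat.mod_lt _ hk0⟩
        have h8 : nxt ⟨(i.val + n) % k, Nat.mod_lt _ hk0⟩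
            = ⟨(i.val + (n + 1)) % k, Nat.mod_lt _ hk0⟩ := by
          apply Fin.ext
          show ((i.val + n) % k + 1) % k = (i.val + (n + 1)) % k
          rw [Nat.mod_add_mod, Nat.add_assoc]
        rw [h8] at h1
        exact h1
    have hn : i.val + (i'.val + k - i.val) = i'.val + k := by omega
    have h3 := haux (i'.val + k - i.val) i
    have h4 : (⟨(i.val + (i'.val + k - i.val)) % k, Nat.mod_lt _ hk0⟩ : Fin k) = i' := by
      apply Fin.ext
      show (i.val + (i'.val + k - i.val)) % k = i'.val
      rw [hn, Nat.add_mod_right, Nat.mod_eq_of_lt i'.2]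
    rwa [h4] at h3
  have hWreach : ∀ j, ∀ x ∈ W j,
      (∃ i, ArcReach (B j) (σ i) x) ∧ (∃ i', ArcReach (B j) x (σ i')) := by
    intro j x hx
    rcases hx with hx | hx
    · obtain ⟨i, hi⟩ := hσsurj x (by exact_mod_cast hx)
      exact ⟨⟨i, hi ▸ Relation.ReflTransGen.refl⟩, ⟨i, hi ▸ Relation.ReflTransGen.refl⟩⟩
    · obtain ⟨e, he, hex⟩ := hx
      obtain ⟨i, hi⟩ := Set.mem_iUnion.1 he
      have h5 := hC3 j i x ⟨e, hi, hex⟩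
      exact ⟨⟨i, h5.1.mono (hCB j i)⟩, ⟨nxt i, h5.2.mono (hCB j i)⟩⟩
  have hSS : ∀ j, SStrongSub A ↑S (W j) (B j) := by
    intro j
    refine ⟨hBA j, Set.subset_union_left, ?_, ?_⟩
    · intro e he
      exact ⟨Or.inr ⟨e, he, Or.inl rfl⟩, Or.inr ⟨e, he, Or.inr rfl⟩⟩
    · intro u hu v hv
      obtain ⟨-, ⟨i1, hu2⟩⟩ := hWreach j u hu
      obtain ⟨⟨i2, hv1⟩, -⟩ := hWreach j v hv
      exact hu2.trans' ((hcyc j i1 i2).trans' hv1)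
  have hdis : ∀ j j' : Fin t, j ≠ j' → Disjoint (B j) (B j') := by
    intro j j' hjj
    rw [Set.disjoint_left]
    intro e hej hej'
    obtain ⟨i, hi⟩ := Set.mem_iUnion.1 hej
    obtain ⟨i', hi'⟩ := Set.mem_iUnion.1 hej'
    have h1 : e ∈ F (idx j i) := Finset.mem_coe.1 (hC1 j i hi)
    have h2' : e ∈ F (idx j' i') := Finset.mem_coe.1 (hC1 j' i' hi')
    have hne : idx j i ≠ idx j' i' := by
      intro hEq
      apply hjj
      have hv : i.val + j.val * k = i'.val + j'.val * k := congrArg Fin.val hEq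
      have hmod : i.val = i'.val := by
        have h9 := congrArg (· % k) hv
        simpa [Nat.add_mul_mod_self_right, Nat.mod_eq_of_lt i.2,
          Nat.mod_eq_of_lt i'.2] using h9
      have h10 : j.val * k = j'.val * k := by omega
      exact Fin.ext (Nat.eq_of_mul_eq_mul_right hk0 h10)
    exact Finset.disjoint_left.1 (hFdis _ _ hne) h1 h2'
  obtain ⟨a, ha, b, hb, hab⟩ := Finset.one_lt_card.1 (by omega : 1 < S.card)
  refine le_csSup (lamS_bddAbove A ↑S a b (by exact_mod_cast ha) (by exact_mod_cast hb) hab) ?_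
  exact ⟨W, B, hSS, hdis⟩

end Main

/-- If `λ(D) = ℓ` and `2 ≤ k ≤ ℓ`, then `λ_k(D) ≥ ⌊ℓ/k⌋`. -/
theorem lamK_ge_arcConn_div {V : Type*} [Fintype V] (A : Set (V × V)) (k ℓ : ℕ)
    (hl : arcConn A = ℓ) (h2 : 2 ≤ k) (hk : k ≤ ℓ) :
    ℓ / k ≤ lamK A k := by
  classical
  rcases isEmpty_or_nonempty V with hV | hV
  · exfalso
    have hset : {m | ∃ F : Finset (V × V), (↑F : Set (V × V)) ⊆ A ∧ F.card = m ∧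
        ¬ IsStrong (A \ (↑F : Set (V × V)))} = ∅ := by
      ext m
      simp only [Set.mem_setOf_eq, Set.mem_empty_iff_false, iff_false]
      rintro ⟨F, -, -, hns⟩
      exact hns fun u v => (IsEmpty.false u).elim
    have h0 : arcConn A = 0 := by
      unfold arcConn
      rw [hset, Nat.sInf_empty]
    omega
  · obtain ⟨v⟩ := hV
    by_cases hone : ∀ u : V, u = v
    · exfalso
      have hset : {m | ∃ F : Finset (V × V), (↑F : Set (V × V)) ⊆ A ∧ F.card = m ∧
          ¬ IsStrong (A \ (↑F : Set (V × V)))} = ∅ := by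
        ext m
        simp only [Set.mem_setOf_eq, Set.mem_empty_iff_false, iff_false]
        rintro ⟨F, -, -, hns⟩
        refine hns fun u w => ?_
        rw [hone u, hone w]
        exact Relation.ReflTransGen.refl
      have h0 : arcConn A = 0 := by
        unfold arcConn
        rw [hset, Nat.sInf_empty]
      omega
    · push_neg at hone
      obtain ⟨u, hu⟩ := hone
      set Fv := (Set.toFinite A).toFinset.filter (fun e => e.1 = v ∧ e.2 ≠ v) with hFv
      have hFvsub : (↑Fv : Set (V × V)) ⊆ A := by
        intro e he
        have h5 : e ∈ Fv := Finset.mem_coe.1 he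
        have := (Finset.mem_filter.1 h5).1
        rwa [Set.Finite.mem_toFinset] at this
      have hFvcard : Fv.card ≤ Fintype.card V - 1 := by
        have hmaps : ∀ e ∈ Fv, e.2 ∈ Finset.univ.erase v := by
          intro e he
          exact Finset.mem_erase.2 ⟨(Finset.mem_filter.1 he).2.2, Finset.mem_univ _⟩
        have hinj : Set.InjOn Prod.snd (↑Fv : Set (V × V)) := by
          intro e1 he1 e2 he2 hEq
          have h1 := (Finset.mem_filter.1 (Finset.mem_coe.1 he1)).2.1
          have h2' := (Finset.mem_filter.1 (Finset.mem_coe.1 he2)).2.1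
          exact Prod.ext (h1.trans h2'.symm) hEq
        have := Finset.card_le_card_of_injOn Prod.snd hmaps hinj
        rwa [Finset.card_erase_of_mem (Finset.mem_univ v), Finset.card_univ] at this
      have hns : ¬ IsStrong (A \ (↑Fv : Set (V × V))) := by
        intro hstrg
        have h5 := hstrg v u
        have h6 : u = v := by
          refine arcReach_fixed h5 ?_
          intro e he he1
          by_contra he2
          have : e ∈ Fv := Finset.mem_filter.2 ⟨(Set.Finite.mem_toFinset _).2 he.1, he1, he2⟩
          exact he.2 (Finset.mem_coe.2 this)
        exact hu h6
      have hmem : Fv.card ∈ {m | ∃ F : Finset (V × V), (↑F : Set (V × V)) ⊆ A ∧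
          F.card = m ∧ ¬ IsStrong (A \ (↑F : Set (V × V)))} := ⟨Fv, hFvsub, rfl, hns⟩
      have hle : ℓ ≤ Fv.card := by
        rw [← hl]
        exact Nat.sInf_le hmem
      have hcardV : k + 1 ≤ Fintype.card V := by omega
      apply le_csInf
      · obtain ⟨S, -, hScard⟩ := Finset.exists_subset_card_eq
          (show k ≤ (Finset.univ : Finset V).card by rw [Finset.card_univ]; omega)
        exact ⟨lamS A ↑S, S, hScard, rfl⟩
      · rintro m ⟨S, hScard, rfl⟩
        exact lamS_ge_div hl h2 hk S hScard
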